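/- Let A be a set of positive integers whose decimal digits avoid 0 and where each digit j ∈ {2,…,9} appears at most n_j times (digit 1 unrestricted). Fix e ≥ 1 and let C_e be the union of: (i) all elements of A with fewer than e digits, and (ii) all e-digit integers without digit 0 in which each digit j appears at most n_j times. If no element of C_e is divisible by 2^e, then no element of A is divisible by 2^e. -/

import Mathlib

/-- Lemma bounding the power of two dividing elements of a digit-constrained set:
let `A` be the set of positive integers with no digit `0` and at most `n j`
occurrences of each digit `j ∈ {2,…,9}` (digit `1` unrestricted), and let `C_e`
consist of the elements of `A` with fewer than `e` digits together with all
`e`-digit integers without digit `0` satisfying the same count constraints.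
If no element of `C_e` is divisible by `2^e`, then no element of `A` is. -/
theorem powerOfTwo_bound (n : ℕ → ℕ) (e : ℕ) (he : 1 ≤ e)
    (A : Set ℕ)
    (hA : A = {x | 0 < x ∧ (∀ d ∈ Nat.digits 10 x, d ≠ 0) ∧
                   ∀ j, 2 ≤ j → j ≤ 9 → (Nat.digits 10 x).count j ≤ n j})
    (Ce : Set ℕ)
    (hCe : Ce = {x ∈ A | (Nat.digits 10 x).length < e} ∪
                {x | (Nat.digits 10 x).length = e ∧
                     (∀ d ∈ Nat.digits 10 x, d ≠ 0) ∧
                     ∀ j, 2 ≤ j → j ≤ 9 → (Nat.digits 10 x).count j ≤ n j})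
    (h : ∀ x ∈ Ce, ¬ 2 ^ e ∣ x) :
    ∀ x ∈ A, ¬ 2 ^ e ∣ x := by
  intro x hx hdvd
  by_cases hlen : (Nat.digits 10 x).length < e
  · exact h x (by rw [hCe]; exact Or.inl ⟨hx, hlen⟩) hdvd
  · push_neg at hlen
    set L := Nat.digits 10 x with hL
    set t := L.take e with ht
    have htlen : t.length = e := by simp [ht, hL, Nat.min_eq_left hlen]; exact hlen
    have htsub : t.Sublist L := List.take_sublist e L
    have hx' := hx
    rw [hA] at hx'
    obtain ⟨hxpos, hnz, hcnt⟩ := hx'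
    -- digits of x % 10^e are t
    have hsplit : x = Nat.ofDigits 10 t + 10 ^ e * Nat.ofDigits 10 (L.drop e) := by
      conv_lhs => rw [← Nat.ofDigits_digits 10 x, ← hL, ← List.take_append_drop e L]
      rw [Nat.ofDigits_append, htlen]
    have hlt : Nat.ofDigits 10 t < 10 ^ e := by
      have := Nat.ofDigits_lt_base_pow_length (b := 10) (l := t) (by norm_num)
        (fun d hd => Nat.digits_lt_base (by norm_num) (htsub.mem hd))
      rwa [htlen] at this
    have hmod : x % 10 ^ e = Nat.ofDigits 10 t := by
      rw [hsplit, Nat.add_mul_mod_self_left, Nat.mod_eq_of_lt hlt]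
    have htne : t ≠ [] := by
      intro hh; rw [hh] at htlen; simp at htlen; omega
    have hdig : Nat.digits 10 (Nat.ofDigits 10 t) = t := by
      apply Nat.digits_ofDigits 10 (by norm_num)
      · exact fun d hd => Nat.digits_lt_base (by norm_num) (htsub.mem hd)
      · intro hne
        exact hnz _ (htsub.mem (List.getLast_mem hne))
    have hyCe : x % 10 ^ e ∈ Ce := by
      rw [hCe]
      right
      simp only [Set.mem_setOf_eq, hmod, hdig]
      exact ⟨htlen, fun d hd => hnz d (htsub.mem hd),
        fun j h2 h9 => le_trans (htsub.count_le j) (hcnt j h2 h9)⟩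
    apply h _ hyCe
    exact (Nat.dvd_mod_iff (pow_dvd_pow_of_dvd (by norm_num) e)).mpr hdvd
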